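/- The reflection equation of Proposition 4.9 (higher-spin version): for every K ∈ ℤ_{≥0}, j ∈ {0,1}, and ℓ ∈ {0,1}, ∑_{I=0}^∞ (∏_{k=1}^{I} (1-q^{2k-1})/(1-s² q^{2k-1})) · L_{x,s}(2I, 1-j; K, ℓ) = ∑_{I=0}^∞ (∏_{k=1}^{I} (1-q^{2k-1})/(1-s² q^{2k-1})) · M_{x,s}(2I, j; K, 1-ℓ), where only finitely many terms of each sum are nonzero (those with 2I + input arrow count = K + output arrow count). -/

import Mathlib

variable {F : Type*} [Field F]

/-- The higher-spin six-vertex `L`-weight `L_{x,s}(I, j; K, ℓ)`. -/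
noncomputable def Lw (q s x : F) (I j K l : ℕ) : F :=
  if j = 0 ∧ l = 0 ∧ K = I then (1 - s*x*q^I) / (1 - s*x)
  else if j = 1 ∧ l = 1 ∧ K = I then (x - s*q^I) / (1 - s*x)
  else if j = 1 ∧ l = 0 ∧ K = I + 1 then (1 - q^(I+1)) / (1 - s*x)
  else if j = 0 ∧ l = 1 ∧ I = K + 1 then x * (1 - s^2*q^K) / (1 - s*x)
  else 0

/-- The higher-spin six-vertex `M`-weight `M_{x,s}(I, j; K, ℓ)`. -/
noncomputable def Mw (q s x : F) (I j K l : ℕ) : F :=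
  if j = 0 ∧ l = 0 ∧ K = I then (x - s*q^I) / (1 - s*x)
  else if j = 1 ∧ l = 1 ∧ K = I then (1 - s*x*q^I) / (1 - s*x)
  else if j = 1 ∧ l = 0 ∧ K = I + 1 then x * (1 - q^(I+1)) / (1 - s*x)
  else if j = 0 ∧ l = 1 ∧ I = K + 1 then (1 - s^2*q^K) / (1 - s*x)
  else 0

lemma prod_key (q s x : F) (hx : 1 - s*x ≠ 0) (m : ℕ)
    (hq : 1 - s^2 * q^(2*m+1) ≠ 0) :
    (∏ k ∈ Finset.Icc 1 m, (1 - q^(2*k-1)) / (1 - s^2 * q^(2*k-1)))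
      * ((1 - q^(2*m+1)) / (1 - s*x))
    = (∏ k ∈ Finset.Icc 1 (m+1), (1 - q^(2*k-1)) / (1 - s^2 * q^(2*k-1)))
      * ((1 - s^2*q^(2*m+1)) / (1 - s*x)) := by
  rw [Finset.prod_Icc_succ_top (Nat.le_add_left 1 m)]
  have h : 2*(m+1)-1 = 2*m+1 := by omega
  rw [h, mul_assoc]
  congr 1
  field_simp
  rw [mul_div_assoc, div_self (by intro h; apply hq; linear_combination h), mul_one]

/-- The reflection equation (higher-spin version of Proposition 4.9 of
Barraquand–Borodin–Corwin–Wheeler): the dot flips the boundary state `i` to `1 - i`. -/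
theorem reflection_equation (q s x : F) (hx : 1 - s*x ≠ 0)
    (hs : ∀ k : ℕ, 1 ≤ k → 1 - s^2 * q^(2*k-1) ≠ 0)
    (K : ℕ) (j l : ℕ) (hj : j ≤ 1) (hl : l ≤ 1) :
    (∑ᶠ I : ℕ, (∏ k ∈ Finset.Icc 1 I, (1 - q^(2*k-1)) / (1 - s^2 * q^(2*k-1)))
        * Lw q s x (2*I) (1-j) K l)
    = ∑ᶠ I : ℕ, (∏ k ∈ Finset.Icc 1 I, (1 - q^(2*k-1)) / (1 - s^2 * q^(2*k-1)))
        * Mw q s x (2*I) j K (1-l) := by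
  set c : ℕ → F := fun I => ∏ k ∈ Finset.Icc 1 I, (1 - q^(2*k-1)) / (1 - s^2 * q^(2*k-1)) with hc
  interval_cases j <;> interval_cases l
  · -- j = 0, l = 0 : crossing case
    rcases Nat.even_or_odd K with ⟨m, hm⟩ | ⟨m, hm⟩
    · -- K even: both sides zero
      have hL : ∀ I : ℕ, c I * Lw q s x (2*I) 1 K 0 = 0 := by
        intro I; simp [Lw]; intro h; omega
      have hM : ∀ I : ℕ, c I * Mw q s x (2*I) 0 K 1 = 0 := by
        intro I; simp [Mw]; intro h; omega
      exact ((finsum_congr hL).trans finsum_zero).trans ((finsum_congr hM).trans finsum_zero).symm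
    · subst hm
      rw [finsum_eq_single _ m (by intro I hI; simp [Lw]; intro h; omega),
          finsum_eq_single _ (m+1) (by intro I hI; simp [Mw]; intro h; omega)]
      have e1 : Lw q s x (2*m) 1 (2*m+1) 0 = (1 - q^(2*m+1)) / (1 - s*x) := by
        simp [Lw]
      have e2 : Mw q s x (2*(m+1)) 0 (2*m+1) 1 = (1 - s^2*q^(2*m+1)) / (1 - s*x) := by
        simp [Mw]; omega
      rw [e1, e2]
      exact prod_key q s x hx m (by have := hs (m+1) (by omega); rwa [show 2*(m+1)-1 = 2*m+1 by omega] at this)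
  · -- j = 0, l = 1 : termwise equal
    apply finsum_congr; intro I
    congr 1
    by_cases hK : K = 2*I <;> simp [Lw, Mw, hK]
  · -- j = 1, l = 0 : termwise equal
    apply finsum_congr; intro I
    congr 1
    by_cases hK : K = 2*I <;> simp [Lw, Mw, hK]
  · -- j = 1, l = 1 : crossing case
    rcases Nat.even_or_odd K with ⟨m, hm⟩ | ⟨m, hm⟩
    · have hL : ∀ I : ℕ, c I * Lw q s x (2*I) 0 K 1 = 0 := by
        intro I; simp [Lw]; intro h; omega
      have hM : ∀ I : ℕ, c I * Mw q s x (2*I) 1 K 0 = 0 := by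
        intro I; simp [Mw]; intro h; omega
      exact ((finsum_congr hL).trans finsum_zero).trans ((finsum_congr hM).trans finsum_zero).symm
    · subst hm
      rw [finsum_eq_single _ (m+1) (by intro I hI; simp [Lw]; intro h; omega),
          finsum_eq_single _ m (by intro I hI; simp [Mw]; intro h; omega)]
      have e1 : Lw q s x (2*(m+1)) 0 (2*m+1) 1 = x * (1 - s^2*q^(2*m+1)) / (1 - s*x) := by
        simp [Lw]; omega
      have e2 : Mw q s x (2*m) 1 (2*m+1) 0 = x * (1 - q^(2*m+1)) / (1 - s*x) := by
        simp [Mw]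
      rw [e1, e2]
      have := prod_key q s x hx m (by have := hs (m+1) (by omega); rwa [show 2*(m+1)-1 = 2*m+1 by omega] at this)
      calc c (m+1) * (x * (1 - s^2*q^(2*m+1)) / (1 - s*x))
          = x * (c (m+1) * ((1 - s^2*q^(2*m+1)) / (1 - s*x))) := by ring
        _ = x * (c m * ((1 - q^(2*m+1)) / (1 - s*x))) := by rw [← this]
        _ = c m * (x * (1 - q^(2*m+1)) / (1 - s*x)) := by ring
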